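/- For all cocycles f ∈ C^{p−1}, g ∈ C^{q−1}, h ∈ C^{s−1} (df = 0, dg = 0, dh = 0), the higher-form symmetry shift operators S^r_f : ψ(λ,μ,ν) ↦ ψ(λ+f, μ, ν), S^b_g : ψ(λ,μ,ν) ↦ ψ(λ, μ+g, ν) and S^g_h : ψ(λ,μ,ν) ↦ ψ(λ, μ, ν+h) commute with the entangler U and with every dressed SPT stabilizer U ∘ X^r_σ ∘ U, U ∘ X^b_ξ ∘ U, U ∘ X^g_ζ ∘ U. Hence the SPT Hamiltonian H_SPT is invariant under the ℤ₂^{(p−1)} × ℤ₂^{(q−1)} × ℤ₂^{(s−1)} higher-form symmetries generated by products of single-site X operators over cocycles (Eq. (globalsym) of Appendix A). -/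

import Mathlib

noncomputable section

open scoped BigOperators

/-- Transport a cochain along an equality of degrees. -/
def cellCast {cells : ℕ → Type} {i j : ℕ} (h : i = j) (x : cells i → ZMod 2) :
    cells j → ZMod 2 :=
  fun σ => x (cast (congrArg cells h.symm) σ)

/-- A *cochain system* of dimension `N` over `𝔽₂ = ZMod 2`: finite sets of cells in
each degree, `𝔽₂`-linear coboundary maps `d` with `d ∘ d = 0`, `𝔽₂`-bilinear associative
cup products satisfying the Leibniz rule, and an `𝔽₂`-linear integral on top-degree
cochains satisfying the Stokes identity.  (These are the structures carried by the `𝔽₂`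
cellular cochains of a closed Poincaré CW complex.) -/
structure CochainSystem (N : ℕ) where
  cells : ℕ → Type
  fintypeCells : ∀ i, Fintype (cells i)
  decEqCells : ∀ i, DecidableEq (cells i)
  d : ∀ i, (cells i → ZMod 2) →ₗ[ZMod 2] (cells (i + 1) → ZMod 2)
  cup : ∀ i j, (cells i → ZMod 2) →ₗ[ZMod 2]
    ((cells j → ZMod 2) →ₗ[ZMod 2] (cells (i + j) → ZMod 2))
  integ : (cells N → ZMod 2) →ₗ[ZMod 2] ZMod 2
  d_comp_d : ∀ (i : ℕ) (x : cells i → ZMod 2), d (i + 1) (d i x) = 0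
  cup_assoc : ∀ {i j k : ℕ} (u : cells i → ZMod 2) (v : cells j → ZMod 2)
    (w : cells k → ZMod 2),
    cup (i + j) k (cup i j u v) w
      = cellCast (Nat.add_assoc i j k).symm (cup i (j + k) u (cup j k v w))
  leibniz : ∀ {i j : ℕ} (u : cells i → ZMod 2) (v : cells j → ZMod 2),
    d (i + j) (cup i j u v)
      = cellCast (by omega : i + 1 + j = i + j + 1) (cup (i + 1) j (d i u) v)
        + cellCast (by omega : i + (j + 1) = i + j + 1) (cup i (j + 1) u (d j v))
  stokes : ∀ (k : ℕ) (hk : k + 1 = N) (w : cells k → ZMod 2),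
    integ (cellCast hk (d k w)) = 0

attribute [instance] CochainSystem.fintypeCells CochainSystem.decEqCells

namespace CochainSystem

variable {N : ℕ}

/-- The degree-`i` cochain space `Cⁱ`. -/
abbrev C (S : CochainSystem N) (i : ℕ) : Type := S.cells i → ZMod 2

/-- The indicator cochain `σ̃` of a cell `σ`. -/
def indicator (S : CochainSystem N) {i : ℕ} (σ : S.cells i) : S.C i :=
  fun τ => if τ = σ then 1 else 0

/-- `∫ (u ∪ v) ∪ w` when the degrees add up to `N`. -/
def integ3 (S : CochainSystem N) {i j k : ℕ} (h : i + j + k = N)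
    (u : S.C i) (v : S.C j) (w : S.C k) : ZMod 2 :=
  S.integ (cellCast h (S.cup (i + j) k (S.cup i j u v) w))

end CochainSystem

/-- The sign `(-1)ᵗ ∈ ℂ` of `t ∈ 𝔽₂`. -/
def sgn (t : ZMod 2) : ℂ := (-1 : ℂ) ^ t.val

open CochainSystem

section SPT

variable {N p q s : ℕ}

/-- A configuration of the three colours of `ℤ₂` matter fields. -/
abbrev SConfig (S : CochainSystem N) (p q s : ℕ) : Type :=
  S.C p × S.C q × S.C s

/-- The three-colour matter space `W = ((C^{p−1} × C^{q−1} × C^{s−1}) → ℂ)`. -/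
abbrev SSpace (S : CochainSystem N) (p q s : ℕ) : Type := SConfig S p q s → ℂ

/-- The CCZ entangler `U`: `(U ψ)(λ,μ,ν) = (−1)^{∫ λ ∪ dμ ∪ dν} ψ(λ,μ,ν)`. -/
def entangler (S : CochainSystem N) (h : p + 1 + (q + 1) + (s + 1) = N + 1) :
    SSpace S p q s → SSpace S p q s :=
  fun ψ x =>
    sgn (S.integ3 (show p + (q + 1) + (s + 1) = N by omega)
      x.1 (S.d q x.2.1) (S.d s x.2.2)) * ψ x

/-- The single-site flip operator `X^r_σ`: `(X^r_σ ψ)(λ,μ,ν) = ψ(λ + σ̃, μ, ν)`. -/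
def flipR (S : CochainSystem N) (p q s : ℕ) (σ : S.cells p) :
    SSpace S p q s → SSpace S p q s :=
  fun ψ x => ψ (x.1 + S.indicator σ, x.2.1, x.2.2)

/-- The single-site flip operator `X^b_ξ`. -/
def flipB (S : CochainSystem N) (p q s : ℕ) (ξ : S.cells q) :
    SSpace S p q s → SSpace S p q s :=
  fun ψ x => ψ (x.1, x.2.1 + S.indicator ξ, x.2.2)

/-- The single-site flip operator `X^g_ζ`. -/
def flipG (S : CochainSystem N) (p q s : ℕ) (ζ : S.cells s) :
    SSpace S p q s → SSpace S p q s :=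
  fun ψ x => ψ (x.1, x.2.1, x.2.2 + S.indicator ζ)

/-- The dressed red SPT (higher-form cluster) stabilizer. -/
def dressedR (S : CochainSystem N) (h : p + 1 + (q + 1) + (s + 1) = N + 1)
    (σ : S.cells p) : SSpace S p q s → SSpace S p q s :=
  fun ψ x =>
    sgn (S.integ3 (show p + (q + 1) + (s + 1) = N by omega)
        (S.indicator σ) (S.d q x.2.1) (S.d s x.2.2))
      * ψ (x.1 + S.indicator σ, x.2.1, x.2.2)

/-- The dressed blue SPT stabilizer. -/
def dressedB (S : CochainSystem N) (h : p + 1 + (q + 1) + (s + 1) = N + 1)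
    (ξ : S.cells q) : SSpace S p q s → SSpace S p q s :=
  fun ψ x =>
    sgn (S.integ3 (show p + (q + 1) + (s + 1) = N by omega)
        x.1 (S.d q (S.indicator ξ)) (S.d s x.2.2))
      * ψ (x.1, x.2.1 + S.indicator ξ, x.2.2)

/-- The dressed green SPT stabilizer. -/
def dressedG (S : CochainSystem N) (h : p + 1 + (q + 1) + (s + 1) = N + 1)
    (ζ : S.cells s) : SSpace S p q s → SSpace S p q s :=
  fun ψ x =>
    sgn (S.integ3 (show p + (q + 1) + (s + 1) = N by omega)
        x.1 (S.d q x.2.1) (S.d s (S.indicator ζ)))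
      * ψ (x.1, x.2.1, x.2.2 + S.indicator ζ)

/-- The trivial paramagnet Hamiltonian `H⁰`: minus the sum of all single-site flips. -/
def H0 (S : CochainSystem N) (p q s : ℕ) : SSpace S p q s → SSpace S p q s :=
  -((∑ σ : S.cells p, flipR S p q s σ) + (∑ ξ : S.cells q, flipB S p q s ξ)
    + (∑ ζ : S.cells s, flipG S p q s ζ))

/-- The higher-form SPT Hamiltonian: minus the sum of all dressed stabilizers. -/
def HSPT (S : CochainSystem N) (h : p + 1 + (q + 1) + (s + 1) = N + 1) :
    SSpace S p q s → SSpace S p q s :=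
  -((∑ σ : S.cells p, dressedR S h σ) + (∑ ξ : S.cells q, dressedB S h ξ)
    + (∑ ζ : S.cells s, dressedG S h ζ))

end SPT

/-- The higher-form symmetry shift operator `S^r_f : ψ(λ,μ,ν) ↦ ψ(λ+f, μ, ν)`. -/
def shiftR {N : ℕ} (S : CochainSystem N) (p q s : ℕ) (f : S.C p) :
    SSpace S p q s → SSpace S p q s :=
  fun ψ x => ψ (x.1 + f, x.2.1, x.2.2)

/-- The higher-form symmetry shift operator `S^b_g : ψ(λ,μ,ν) ↦ ψ(λ, μ+g, ν)`. -/
def shiftB {N : ℕ} (S : CochainSystem N) (p q s : ℕ) (g : S.C q) :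
    SSpace S p q s → SSpace S p q s :=
  fun ψ x => ψ (x.1, x.2.1 + g, x.2.2)

/-- The higher-form symmetry shift operator `S^g_h : ψ(λ,μ,ν) ↦ ψ(λ, μ, ν+h)`. -/
def shiftG {N : ℕ} (S : CochainSystem N) (p q s : ℕ) (e : S.C s) :
    SSpace S p q s → SSpace S p q s :=
  fun ψ x => ψ (x.1, x.2.1, x.2.2 + e)

section Helpers

lemma cellCast_refl {cells : ℕ → Type} {i : ℕ} (h : i = i) (x : cells i → ZMod 2) :
    cellCast h x = x := rfl

lemma cellCast_comp {cells : ℕ → Type} {i j k : ℕ} (h1 : i = j) (h2 : j = k)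
    (x : cells i → ZMod 2) : cellCast h2 (cellCast h1 x) = cellCast (h1.trans h2) x := by
  subst h1; subst h2; rfl

lemma cellCast_add {cells : ℕ → Type} {i j : ℕ} (h : i = j) (x y : cells i → ZMod 2) :
    cellCast h (x + y) = cellCast h x + cellCast h y := rfl

lemma cellCast_zero {cells : ℕ → Type} {i j : ℕ} (h : i = j) :
    cellCast h (0 : cells i → ZMod 2) = 0 := rfl

namespace CochainSystem

variable {N : ℕ} (S : CochainSystem N)

lemma cup_cellCast_right {i j k : ℕ} (h : k = j) (u : S.C i) (v : S.C k) :
    S.cup i j u (cellCast h v) = cellCast (by rw [h]) (S.cup i k u v) := by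
  subst h; rfl

lemma integ3_add_left {i j k : ℕ} (h : i + j + k = N) (u u' : S.C i) (v : S.C j) (w : S.C k) :
    S.integ3 h (u + u') v w = S.integ3 h u v w + S.integ3 h u' v w := by
  simp [integ3, map_add, LinearMap.add_apply, cellCast_add]

lemma integ3_add_mid {i j k : ℕ} (h : i + j + k = N) (u : S.C i) (v v' : S.C j) (w : S.C k) :
    S.integ3 h u (v + v') w = S.integ3 h u v w + S.integ3 h u v' w := by
  simp [integ3, map_add, LinearMap.add_apply, cellCast_add]

lemma integ3_add_right {i j k : ℕ} (h : i + j + k = N) (u : S.C i) (v : S.C j) (w w' : S.C k) :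
    S.integ3 h u v (w + w') = S.integ3 h u v w + S.integ3 h u v w' := by
  simp [integ3, map_add, LinearMap.add_apply, cellCast_add]

/-- Key Stokes/Leibniz computation: `∫ f ∪ dμ ∪ dν = 0` for a cocycle `f`. -/
lemma key {p q s : ℕ} (hN : p + (q + 1) + (s + 1) = N)
    (f : S.C p) (hf : S.d p f = 0) (μ : S.C q) (ν : S.C s) :
    S.integ3 hN f (S.d q μ) (S.d s ν) = 0 := by
  have hdd : S.d (s + 1) (S.d s ν) = 0 := S.d_comp_d s ν
  have hA : S.cup (q + 1) (s + 1) (S.d q μ) (S.d s ν)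
      = cellCast (by omega) (S.d (q + (s + 1)) (S.cup q (s + 1) μ (S.d s ν))) := by
    rw [S.leibniz μ (S.d s ν), hdd]
    simp only [map_zero, cellCast_zero, add_zero, cellCast_add, cellCast_comp, cellCast_refl]
  set B := S.cup q (s + 1) μ (S.d s ν) with hB
  have hC : S.cup p (q + (s + 1) + 1) f (S.d (q + (s + 1)) B)
      = cellCast (by omega) (S.d (p + (q + (s + 1))) (S.cup p (q + (s + 1)) f B)) := by
    rw [S.leibniz f B, hf]
    simp only [map_zero, LinearMap.zero_apply, cellCast_zero, zero_add, cellCast_comp,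
      cellCast_refl]
  unfold integ3
  rw [S.cup_assoc f (S.d q μ) (S.d s ν), hA, S.cup_cellCast_right, hC]
  simp only [cellCast_comp]
  exact S.stokes _ _ _

end CochainSystem

lemma sgn_cancel (t u : ZMod 2) : sgn t * sgn (t + u) = sgn u := by
  have h01 : ∀ a : ZMod 2, a = 0 ∨ a = 1 := by decide
  rcases h01 t with rfl | rfl <;> rcases h01 u with rfl | rfl <;>
    simp [sgn, show ZMod.val (0 : ZMod 2) = 0 from rfl,
      show ZMod.val (1 : ZMod 2) = 1 from rfl,
      show ((1 : ZMod 2) + 1) = 0 from rfl, show ZMod.val (2 : ZMod 2) = 0 from rfl]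

end Helpers
section Main

variable {N p q s : ℕ} (S : CochainSystem N) (h : p + 1 + (q + 1) + (s + 1) = N + 1)

lemma dressedR_eq (σ : S.cells p) :
    entangler S h ∘ flipR S p q s σ ∘ entangler S h = dressedR S h σ := by
  funext ψ x
  simp only [Function.comp_apply, entangler, flipR, dressedR]
  rw [S.integ3_add_left, ← mul_assoc, sgn_cancel]

lemma dressedB_eq (ξ : S.cells q) :
    entangler S h ∘ flipB S p q s ξ ∘ entangler S h = dressedB S h ξ := by
  funext ψ x
  simp only [Function.comp_apply, entangler, flipB, dressedB]
  rw [map_add, S.integ3_add_mid, ← mul_assoc, sgn_cancel]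

lemma dressedG_eq (ζ : S.cells s) :
    entangler S h ∘ flipG S p q s ζ ∘ entangler S h = dressedG S h ζ := by
  funext ψ x
  simp only [Function.comp_apply, entangler, flipG, dressedG]
  rw [map_add, S.integ3_add_right, ← mul_assoc, sgn_cancel]

variable (f : S.C p) (g : S.C q) (e : S.C s)

lemma shiftR_entangler (hf : S.d p f = 0) : shiftR S p q s f ∘ entangler S h = entangler S h ∘ shiftR S p q s f := by
  funext ψ x
  simp only [Function.comp_apply, shiftR, entangler]
  rw [S.integ3_add_left, S.key _ f hf, add_zero]

lemma shiftB_entangler (hg : S.d q g = 0) : shiftB S p q s g ∘ entangler S h = entangler S h ∘ shiftB S p q s g := by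
  funext ψ x
  simp only [Function.comp_apply, shiftB, entangler]
  rw [map_add, hg, add_zero]

lemma shiftG_entangler (he : S.d s e = 0) : shiftG S p q s e ∘ entangler S h = entangler S h ∘ shiftG S p q s e := by
  funext ψ x
  simp only [Function.comp_apply, shiftG, entangler]
  rw [map_add, he, add_zero]

lemma shiftR_dressedR (σ : S.cells p) :
    shiftR S p q s f ∘ dressedR S h σ = dressedR S h σ ∘ shiftR S p q s f := by
  funext ψ x
  simp only [Function.comp_apply, shiftR, dressedR]
  rw [add_right_comm]

lemma shiftR_dressedB (hf : S.d p f = 0) (ξ : S.cells q) :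
    shiftR S p q s f ∘ dressedB S h ξ = dressedB S h ξ ∘ shiftR S p q s f := by
  funext ψ x
  simp only [Function.comp_apply, shiftR, dressedB]
  rw [S.integ3_add_left, S.key _ f hf, add_zero]

lemma shiftR_dressedG (hf : S.d p f = 0) (ζ : S.cells s) :
    shiftR S p q s f ∘ dressedG S h ζ = dressedG S h ζ ∘ shiftR S p q s f := by
  funext ψ x
  simp only [Function.comp_apply, shiftR, dressedG]
  rw [S.integ3_add_left, S.key _ f hf, add_zero]

lemma shiftB_dressedR (hg : S.d q g = 0) (σ : S.cells p) :
    shiftB S p q s g ∘ dressedR S h σ = dressedR S h σ ∘ shiftB S p q s g := by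
  funext ψ x
  simp only [Function.comp_apply, shiftB, dressedR]
  rw [map_add, hg, add_zero]

lemma shiftB_dressedB (ξ : S.cells q) :
    shiftB S p q s g ∘ dressedB S h ξ = dressedB S h ξ ∘ shiftB S p q s g := by
  funext ψ x
  simp only [Function.comp_apply, shiftB, dressedB]
  rw [add_right_comm]

lemma shiftB_dressedG (hg : S.d q g = 0) (ζ : S.cells s) :
    shiftB S p q s g ∘ dressedG S h ζ = dressedG S h ζ ∘ shiftB S p q s g := by
  funext ψ x
  simp only [Function.comp_apply, shiftB, dressedG]
  rw [map_add, hg, add_zero]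

lemma shiftG_dressedR (he : S.d s e = 0) (σ : S.cells p) :
    shiftG S p q s e ∘ dressedR S h σ = dressedR S h σ ∘ shiftG S p q s e := by
  funext ψ x
  simp only [Function.comp_apply, shiftG, dressedR]
  rw [map_add, he, add_zero]

lemma shiftG_dressedB (he : S.d s e = 0) (ξ : S.cells q) :
    shiftG S p q s e ∘ dressedB S h ξ = dressedB S h ξ ∘ shiftG S p q s e := by
  funext ψ x
  simp only [Function.comp_apply, shiftG, dressedB]
  rw [map_add, he, add_zero]

lemma shiftG_dressedG (ζ : S.cells s) :
    shiftG S p q s e ∘ dressedG S h ζ = dressedG S h ζ ∘ shiftG S p q s e := by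
  funext ψ x
  simp only [Function.comp_apply, shiftG, dressedG]
  rw [add_right_comm]

lemma hspt_comm (T : SSpace S p q s → SSpace S p q s)
    (m : SConfig S p q s → SConfig S p q s) (hT : T = fun ψ x => ψ (m x))
    (hR : ∀ σ, T ∘ dressedR S h σ = dressedR S h σ ∘ T)
    (hB : ∀ ξ, T ∘ dressedB S h ξ = dressedB S h ξ ∘ T)
    (hG : ∀ ζ, T ∘ dressedG S h ζ = dressedG S h ζ ∘ T) :
    T ∘ HSPT S h = HSPT S h ∘ T := by
  subst hT
  funext ψ x
  show HSPT S h ψ (m x) = HSPT S h (fun y => ψ (m y)) x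
  simp only [HSPT, Pi.neg_apply, Pi.add_apply, Finset.sum_apply, neg_inj]
  refine congrArg₂ (· + ·) (congrArg₂ (· + ·) ?_ ?_) ?_
  · exact Finset.sum_congr rfl fun σ _ => congrFun (congrFun (hR σ) ψ) x
  · exact Finset.sum_congr rfl fun ξ _ => congrFun (congrFun (hB ξ) ψ) x
  · exact Finset.sum_congr rfl fun ζ _ => congrFun (congrFun (hG ζ) ψ) x

end Main
/-- **Higher-form symmetries of the SPT Hamiltonian (Eq. (globalsym), Appendix A).**
For cocycles `f ∈ C^{p−1}`, `g ∈ C^{q−1}`, `e ∈ C^{s−1}`, the shift operators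
`S^r_f`, `S^b_g`, `S^g_e` commute with the entangler `U` and with every dressed SPT
stabilizer `U ∘ X^r_σ ∘ U`, `U ∘ X^b_ξ ∘ U`, `U ∘ X^g_ζ ∘ U`; hence the SPT
Hamiltonian `H_SPT` is invariant under the `ℤ₂^{(p−1)} × ℤ₂^{(q−1)} × ℤ₂^{(s−1)}`
higher-form symmetries. -/
theorem spt_higher_form_symmetry
    {N p q s : ℕ} (S : CochainSystem N) (h : p + 1 + (q + 1) + (s + 1) = N + 1)
    (f : S.C p) (hf : S.d p f = 0)
    (g : S.C q) (hg : S.d q g = 0)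
    (e : S.C s) (he : S.d s e = 0) :
    (shiftR S p q s f ∘ entangler S h = entangler S h ∘ shiftR S p q s f) ∧
    (shiftB S p q s g ∘ entangler S h = entangler S h ∘ shiftB S p q s g) ∧
    (shiftG S p q s e ∘ entangler S h = entangler S h ∘ shiftG S p q s e) ∧
    (∀ σ : S.cells p,
      shiftR S p q s f ∘ (entangler S h ∘ flipR S p q s σ ∘ entangler S h)
        = (entangler S h ∘ flipR S p q s σ ∘ entangler S h) ∘ shiftR S p q s f) ∧
    (∀ ξ : S.cells q,
      shiftR S p q s f ∘ (entangler S h ∘ flipB S p q s ξ ∘ entangler S h)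
        = (entangler S h ∘ flipB S p q s ξ ∘ entangler S h) ∘ shiftR S p q s f) ∧
    (∀ ζ : S.cells s,
      shiftR S p q s f ∘ (entangler S h ∘ flipG S p q s ζ ∘ entangler S h)
        = (entangler S h ∘ flipG S p q s ζ ∘ entangler S h) ∘ shiftR S p q s f) ∧
    (∀ σ : S.cells p,
      shiftB S p q s g ∘ (entangler S h ∘ flipR S p q s σ ∘ entangler S h)
        = (entangler S h ∘ flipR S p q s σ ∘ entangler S h) ∘ shiftB S p q s g) ∧
    (∀ ξ : S.cells q,
      shiftB S p q s g ∘ (entangler S h ∘ flipB S p q s ξ ∘ entangler S h)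
        = (entangler S h ∘ flipB S p q s ξ ∘ entangler S h) ∘ shiftB S p q s g) ∧
    (∀ ζ : S.cells s,
      shiftB S p q s g ∘ (entangler S h ∘ flipG S p q s ζ ∘ entangler S h)
        = (entangler S h ∘ flipG S p q s ζ ∘ entangler S h) ∘ shiftB S p q s g) ∧
    (∀ σ : S.cells p,
      shiftG S p q s e ∘ (entangler S h ∘ flipR S p q s σ ∘ entangler S h)
        = (entangler S h ∘ flipR S p q s σ ∘ entangler S h) ∘ shiftG S p q s e) ∧
    (∀ ξ : S.cells q,
      shiftG S p q s e ∘ (entangler S h ∘ flipB S p q s ξ ∘ entangler S h)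
        = (entangler S h ∘ flipB S p q s ξ ∘ entangler S h) ∘ shiftG S p q s e) ∧
    (∀ ζ : S.cells s,
      shiftG S p q s e ∘ (entangler S h ∘ flipG S p q s ζ ∘ entangler S h)
        = (entangler S h ∘ flipG S p q s ζ ∘ entangler S h) ∘ shiftG S p q s e) ∧
    (shiftR S p q s f ∘ HSPT S h = HSPT S h ∘ shiftR S p q s f) ∧
    (shiftB S p q s g ∘ HSPT S h = HSPT S h ∘ shiftB S p q s g) ∧
    (shiftG S p q s e ∘ HSPT S h = HSPT S h ∘ shiftG S p q s e) := by
  refine ⟨shiftR_entangler S h f hf, shiftB_entangler S h g hg, shiftG_entangler S h e he,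
    ?_, ?_, ?_, ?_, ?_, ?_, ?_, ?_, ?_, ?_, ?_, ?_⟩
  · intro σ; rw [dressedR_eq]; exact shiftR_dressedR S h f σ
  · intro ξ; rw [dressedB_eq]; exact shiftR_dressedB S h f hf ξ
  · intro ζ; rw [dressedG_eq]; exact shiftR_dressedG S h f hf ζ
  · intro σ; rw [dressedR_eq]; exact shiftB_dressedR S h g hg σ
  · intro ξ; rw [dressedB_eq]; exact shiftB_dressedB S h g ξ
  · intro ζ; rw [dressedG_eq]; exact shiftB_dressedG S h g hg ζ
  · intro σ; rw [dressedR_eq]; exact shiftG_dressedR S h e he σ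
  · intro ξ; rw [dressedB_eq]; exact shiftG_dressedB S h e he ξ
  · intro ζ; rw [dressedG_eq]; exact shiftG_dressedG S h e ζ
  · exact hspt_comm S h _ (fun x => (x.1 + f, x.2.1, x.2.2)) rfl
      (shiftR_dressedR S h f) (shiftR_dressedB S h f hf) (shiftR_dressedG S h f hf)
  · exact hspt_comm S h _ (fun x => (x.1, x.2.1 + g, x.2.2)) rfl
      (shiftB_dressedR S h g hg) (shiftB_dressedB S h g) (shiftB_dressedG S h g hg)
  · exact hspt_comm S h _ (fun x => (x.1, x.2.1, x.2.2 + e)) rfl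
      (shiftG_dressedR S h e he) (shiftG_dressedB S h e he) (shiftG_dressedG S h e)
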